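/- (Weyl asymptotics) Let Δ_s be the Laplacian on a stationary Bratteli diagram, with eigenvalues satisfying x_− Λ^n + y_− ≤ |λ_γ| ≤ x_+ Λ^n + y_+ for γ of length n, where Λ = θ^{(d+2−s)/d} > 1 (i.e., s < d+2), and with c_1 θ^n ≤ Card(Π_n) ≤ c_2 θ^n. Let N(λ) be the number of eigenvalues (with multiplicity) of modulus at most λ. Then there exist constants 0 < c_− < c_+ such that c_− λ^{d/(d−s+2)} ≤ N(λ) ≤ c_+ λ^{d/(d−s+2)} as λ → +∞. In particular, for s = d, N(λ) ≍ λ^{d/2}. -/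
import Mathlib

set_option maxHeartbeats 1000000


/-- Weyl asymptotics: for `s < d+2`, with
`Λ = θ^{(d+2−s)/d} > 1`, eigenvalue moduli `xmΛⁿ + ym ≤ |λ_γ| ≤ xpΛⁿ + yp`
for `γ ∈ Π_n` and `c₁θⁿ ≤ Card(Π_n) ≤ c₂θⁿ`, the eigenvalue counting
function `N(λ)` (number of eigenvalues, counted with multiplicity via paths,
of modulus `≤ λ`) satisfies
`cm λ^{d/(d−s+2)} ≤ N(λ) ≤ cp λ^{d/(d−s+2)}` as `λ → ∞`. -/
theorem stmt_15 (θ d s : ℝ) (hθ : 1 < θ) (hd : 0 < d) (hs : s < d + 2)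
    (P : ℕ → Type) [∀ n, Fintype (P n)]
    (c1 c2 : ℝ) (hc1 : 0 < c1) (hc2 : c1 ≤ c2)
    (hcard : ∀ n : ℕ, c1 * θ ^ (n : ℝ) ≤ (Fintype.card (P n) : ℝ) ∧
      (Fintype.card (P n) : ℝ) ≤ c2 * θ ^ (n : ℝ))
    (lam : ∀ n, P n → ℝ)
    (xm xp ym yp : ℝ) (hx : 0 < xm) (hxx : xm ≤ xp) (hy : 0 < ym) (hyy : ym ≤ yp)
    (hlam : ∀ (n : ℕ) (γ : P n),
      xm * (θ ^ ((d + 2 - s) / d)) ^ n + ym ≤ |lam n γ| ∧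
      |lam n γ| ≤ xp * (θ ^ ((d + 2 - s) / d)) ^ n + yp)
    (N : ℝ → ℕ)
    (hN : ∀ (t : ℝ) (m : ℕ), (∀ n, m ≤ n → ∀ γ : P n, t < |lam n γ|) →
      N t = ∑ n ∈ Finset.range m,
        (Finset.univ.filter (fun γ : P n => |lam n γ| ≤ t)).card) :
    ∃ cm cp : ℝ, 0 < cm ∧ cm < cp ∧
      ∀ᶠ t : ℝ in Filter.atTop,
        cm * t ^ (d / (d - s + 2)) ≤ (N t : ℝ) ∧
        (N t : ℝ) ≤ cp * t ^ (d / (d - s + 2)) := by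
  have hθ0 : (0:ℝ) < θ := by linarith
  have hd2 : (0:ℝ) < d - s + 2 := by linarith
  set e : ℝ := (d + 2 - s) / d with he
  set Λ : ℝ := θ ^ e with hΛdef
  have he0 : 0 < e := div_pos (by linarith) hd
  have hΛ1 : 1 < Λ := (Real.one_lt_rpow_iff_of_pos hθ0).mpr (Or.inl ⟨hθ, he0⟩)
  have hΛ0 : (0:ℝ) < Λ := by linarith
  have hxp : (0:ℝ) < xp := lt_of_lt_of_le hx hxx
  have hyp : (0:ℝ) < yp := lt_of_lt_of_le hy hyy
  set α : ℝ := d / (d - s + 2) with hα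
  have hα0 : 0 < α := div_pos hd hd2
  have heα : e * α = 1 := by
    rw [he, hα]
    field_simp
    ring
  have key : ∀ n : ℕ, θ ^ (n : ℝ) = (Λ ^ n) ^ α := by
    intro n
    rw [hΛdef, ← Real.rpow_natCast (θ ^ e) n, ← Real.rpow_mul hθ0.le,
      ← Real.rpow_mul hθ0.le]
    congr 1
    rw [show e * (n:ℝ) * α = (n:ℝ) * (e * α) from by ring, heα, mul_one]
  -- the constants
  set cm0 : ℝ := c1 * (1 / (2 * xp * Λ)) ^ α with hcm0
  set cp0 : ℝ := c2 / (θ - 1) * (Λ / xm) ^ α with hcp0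
  have hcm0pos : 0 < cm0 := by
    apply mul_pos hc1
    exact Real.rpow_pos_of_pos (by positivity) α
  refine ⟨cm0, max cp0 (cm0 + 1), hcm0pos, lt_of_lt_of_le (by linarith) (le_max_right _ _), ?_⟩
  rw [Filter.eventually_atTop]
  refine ⟨xp + yp + yp + 1, fun t ht => ?_⟩
  have ht0 : (0:ℝ) < t := by linarith
  have htα0 : (0:ℝ) ≤ t ^ α := Real.rpow_nonneg ht0.le α
  -- define m
  have hexm : ∃ k : ℕ, t < xm * Λ ^ k + ym := by
    obtain ⟨k, hk⟩ := pow_unbounded_of_one_lt (t / xm) hΛ1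
    exact ⟨k, by nlinarith [(div_lt_iff₀ hx).mp hk]⟩
  have hexp' : ∃ k : ℕ, t < xp * Λ ^ k + yp := by
    obtain ⟨k, hk⟩ := hexm
    exact ⟨k, by nlinarith [pow_pos hΛ0 k]⟩
  obtain ⟨m, hm_spec, hm_min⟩ : ∃ m : ℕ, (t < xm * Λ ^ m + ym) ∧
      ∀ k, k < m → xm * Λ ^ k + ym ≤ t :=
    ⟨Nat.find hexm, Nat.find_spec hexm, fun k hk => not_lt.mp (Nat.find_min hexm hk)⟩
  obtain ⟨m', hm'_spec, hm'_min⟩ : ∃ m' : ℕ, (t < xp * Λ ^ m' + yp) ∧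
      ∀ k, k < m' → xp * Λ ^ k + yp ≤ t :=
    ⟨Nat.find hexp', Nat.find_spec hexp', fun k hk => not_lt.mp (Nat.find_min hexp' hk)⟩
  have hm'1 : 1 ≤ m' := by
    rcases Nat.eq_zero_or_pos m' with h0 | h; swap; · exact h
    have := hm'_spec
    rw [h0] at this
    simp only [pow_zero, mul_one] at this
    linarith
  set nstar := m' - 1 with hnstar
  have hm'eq : m' = nstar + 1 := by omega
  have hnst : xp * Λ ^ nstar + yp ≤ t := hm'_min nstar (by omega)
  have hnstm : nstar < m := by
    by_contra hcon
    push_neg at hcon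
    have h1 : Λ ^ m ≤ Λ ^ nstar := pow_le_pow_right₀ hΛ1.le hcon
    have h2 : xm * Λ ^ m ≤ xm * Λ ^ nstar := by nlinarith
    have h3 : xm * Λ ^ nstar ≤ xp * Λ ^ nstar := by nlinarith [pow_pos hΛ0 nstar]
    linarith
  have hm1 : 1 ≤ m := by omega
  have hmeq : m = (m - 1) + 1 := by omega
  have hmm1 : xm * Λ ^ (m - 1) + ym ≤ t := hm_min (m - 1) (by omega)
  -- N t formula
  have hNval : N t = ∑ n ∈ Finset.range m,
      (Finset.univ.filter (fun γ : P n => |lam n γ| ≤ t)).card := by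
    apply hN
    intro n hn γ
    have h1 := (hlam n γ).1
    have h2 : Λ ^ m ≤ Λ ^ n := pow_le_pow_right₀ hΛ1.le hn
    have : xm * Λ ^ m + ym ≤ xm * Λ ^ n + ym := by nlinarith
    linarith
  constructor
  · -- lower bound
    have hfull : (Finset.univ.filter (fun γ : P nstar => |lam nstar γ| ≤ t)) =
        (Finset.univ : Finset (P nstar)) := by
      apply Finset.filter_true_of_mem
      intro γ _
      have h2 := (hlam nstar γ).2
      linarith
    have hsingle : Fintype.card (P nstar) ≤ N t := by
      rw [hNval]
      have := Finset.single_le_sum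
        (f := fun n => (Finset.univ.filter (fun γ : P n => |lam n γ| ≤ t)).card)
        (fun i _ => Nat.zero_le _) (Finset.mem_range.mpr hnstm)
      simpa [hfull, Finset.card_univ] using this
    have hc : c1 * θ ^ (nstar : ℝ) ≤ (N t : ℝ) :=
      le_trans (hcard nstar).1 (by exact_mod_cast hsingle)
    rw [key nstar] at hc
    -- Λ ^ nstar ≥ t / (2 * xp * Λ)
    have hΛn : t / (2 * xp * Λ) ≤ Λ ^ nstar := by
      rw [hm'eq, pow_succ] at hm'_spec
      rw [div_le_iff₀ (by positivity)]
      nlinarith [pow_pos hΛ0 nstar]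
    have hstep : (t / (2 * xp * Λ)) ^ α ≤ (Λ ^ nstar) ^ α :=
      Real.rpow_le_rpow (by positivity) hΛn hα0.le
    have hprod : (t / (2 * xp * Λ)) ^ α = t ^ α * (1 / (2 * xp * Λ)) ^ α := by
      rw [← Real.mul_rpow ht0.le (by positivity)]
      congr 1
      field_simp
    calc cm0 * t ^ α = c1 * (t ^ α * (1 / (2 * xp * Λ)) ^ α) := by rw [hcm0]; ring
      _ = c1 * (t / (2 * xp * Λ)) ^ α := by rw [hprod]
      _ ≤ c1 * (Λ ^ nstar) ^ α := by nlinarith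
      _ ≤ (N t : ℝ) := hc
  · -- upper bound
    have hub : (N t : ℝ) ≤ ∑ n ∈ Finset.range m, c2 * θ ^ (n : ℝ) := by
      rw [hNval]
      push_cast
      apply Finset.sum_le_sum
      intro n _
      exact le_trans (by exact_mod_cast Finset.card_filter_le _ _) (hcard n).2
    have hgeom : ∑ n ∈ Finset.range m, c2 * θ ^ (n : ℝ) = c2 * ((θ ^ m - 1) / (θ - 1)) := by
      rw [← Finset.mul_sum]
      congr 1
      have : ∀ n ∈ Finset.range m, θ ^ (n : ℝ) = θ ^ n := fun n _ => Real.rpow_natCast θ n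
      rw [Finset.sum_congr rfl this, geom_sum_eq (by linarith) m]
    have hθm : (θ:ℝ) ^ m ≤ (t / xm * Λ) ^ α := by
      have h1 : θ ^ (m : ℝ) = (Λ ^ m) ^ α := key m
      rw [Real.rpow_natCast] at h1
      rw [h1]
      apply Real.rpow_le_rpow (by positivity) _ hα0.le
      have : Λ ^ (m - 1) ≤ t / xm := by
        rw [le_div_iff₀ hx]
        nlinarith
      calc Λ ^ m = Λ ^ (m - 1) * Λ := by
            rw [← pow_succ, Nat.sub_add_cancel hm1]
        _ ≤ t / xm * Λ := by nlinarith
    have hprod2 : (t / xm * Λ) ^ α = t ^ α * (Λ / xm) ^ α := by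
      rw [← Real.mul_rpow ht0.le (by positivity)]
      congr 1
      field_simp
    have hθ1 : (0:ℝ) < θ - 1 := by linarith
    calc (N t : ℝ) ≤ c2 * ((θ ^ m - 1) / (θ - 1)) := by rw [← hgeom]; exact hub
      _ ≤ c2 * (θ ^ m / (θ - 1)) := by
          gcongr
          · linarith
          · linarith
      _ ≤ c2 * ((t / xm * Λ) ^ α / (θ - 1)) := by
          gcongr
          linarith
      _ = cp0 * t ^ α := by rw [hcp0, hprod2]; ring
      _ ≤ max cp0 (cm0 + 1) * t ^ α := by
          apply mul_le_mul_of_nonneg_right (le_max_left _ _) htα0
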